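/- Fix b, c > 0 and set θ = b/c. Let (φ_k)_{k ≥ 1} be a real sequence with φ_1 = 1/(2c) = θ/(2b), satisfying for all n ≥ 2 the recursion (n+2)φ_{n+1} + (θ − n − 1)φ_n − θ((n−2)/(n−1))φ_{n−1} = 0, and assume sup_k k|φ_k| < ∞ (so the power series below has radius of convergence at least 1). Then the function π(u) := Σ_{k ≥ 1} φ_k u^{k−1} is well defined and twice differentiable on [0,1) and solves there the ODE u²(1−u)π''(u) + u(θu(1−u) + 2 − 3u)π'(u) − 2π(u) + θ/b = 0. -/

import Mathlib

private lemma quart_summable (C d : ℝ) {r : ℝ} (hr : |r| < 1) :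
    Summable (fun n : ℕ => C * ((n : ℝ) + d) ^ 4 * r ^ n) := by
  have h : ∀ i : ℕ, Summable (fun n : ℕ => (n : ℝ) ^ i * r ^ n) := fun i =>
    summable_pow_mul_geometric_of_norm_lt_one i (by simpa using hr)
  have H := (((((h 4).mul_left C).add ((h 3).mul_left (4 * C * d))).add
    ((h 2).mul_left (6 * C * d ^ 2))).add ((h 1).mul_left (4 * C * d ^ 3))).add
    ((h 0).mul_left (C * d ^ 4))
  exact H.congr fun n => by ring

private lemma summ_cube (q : ℕ → ℝ) (C : ℝ) (hC : 0 ≤ C)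
    (hq : ∀ n : ℕ, |q n| ≤ C * ((n : ℝ) + 2) ^ 3) {v : ℝ} (hv : |v| < 1) :
    Summable (fun n : ℕ => q n * v ^ n) := by
  refine Summable.of_norm_bounded (quart_summable C 2 (r := |v|) (by rwa [abs_abs])) fun n => ?_
  have h1 : ‖q n * v ^ n‖ = |q n| * |v| ^ n := by rw [norm_mul, norm_pow]; rfl
  rw [h1]
  have h2 : (1 : ℝ) ≤ (n : ℝ) + 2 := by have := Nat.cast_nonneg (α := ℝ) n; linarith
  calc |q n| * |v| ^ n ≤ (C * ((n : ℝ) + 2) ^ 3) * |v| ^ n := by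
        gcongr; exact hq n
    _ ≤ (C * ((n : ℝ) + 2) ^ 4) * |v| ^ n := by
        gcongr
        · norm_num
    _ = C * ((n : ℝ) + 2) ^ 4 * |v| ^ n := by ring

private lemma shift_hasSum {F : ℕ → ℝ} {a : ℝ} (j : ℕ)
    (h : HasSum (fun k : ℕ => F (k + j)) a) (h0 : ∀ i < j, F i = 0) : HasSum F a := by
  have := (hasSum_nat_add_iff j).mp h
  simpa [Finset.sum_eq_zero fun i hi => h0 i (Finset.mem_range.mp hi)] using this

private lemma hasSum_congr' {f g : ℕ → ℝ} {a : ℝ} (h : HasSum f a) (he : ∀ n, f n = g n) :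
    HasSum g a := (funext he : f = g) ▸ h

private lemma core (p : ℕ → ℝ) (C : ℝ) (hC : 0 ≤ C)
    (hp : ∀ n : ℕ, |p n| ≤ C * ((n : ℝ) + 2) ^ 3) {u : ℝ} (hu : |u| < 1) :
    HasDerivAt (fun v : ℝ => ∑' k : ℕ, p k * v ^ k)
      (∑' k : ℕ, ((k : ℝ) + 1) * p (k + 1) * u ^ k) u := by
  set r : ℝ := (|u| + 1) / 2 with hr
  have hu0 : 0 ≤ |u| := abs_nonneg u
  have hr0 : 0 < r := by rw [hr]; linarith
  have hur : |u| < r := by rw [hr]; linarith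
  have hr1 : r < 1 := by rw [hr]; linarith
  -- summable majorant
  have hM : Summable (fun n : ℕ => C * ((n : ℝ) + 2) ^ 4 * r ^ (n - 1)) := by
    rw [← summable_nat_add_iff 1]
    refine (quart_summable C 3 (r := r) (by rw [abs_of_pos hr0]; exact hr1)).congr fun n => ?_
    simp only [Nat.add_sub_cancel]
    push_cast
    ring
  -- bound on the derivative terms
  have hbound : ∀ n : ℕ, ∀ x ∈ Metric.ball (0 : ℝ) r,
      ‖p n * ((n : ℝ) * x ^ (n - 1))‖ ≤ C * ((n : ℝ) + 2) ^ 4 * r ^ (n - 1) := by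
    intro n x hx
    have hxr : |x| ≤ r := le_of_lt (by simpa [Real.dist_eq] using hx)
    have hxp : |x| ^ (n - 1) ≤ r ^ (n - 1) := pow_le_pow_left₀ (abs_nonneg x) hxr _
    have h1 : ‖p n * ((n : ℝ) * x ^ (n - 1))‖ = |p n| * ((n : ℝ) * |x| ^ (n - 1)) := by
      rw [norm_mul, norm_mul, norm_pow]
      simp [abs_of_nonneg (Nat.cast_nonneg (α := ℝ) n)]
    rw [h1]
    have hn2 : (0 : ℝ) ≤ (n : ℝ) + 2 := by positivity
    have hncast : (0:ℝ) ≤ (n : ℝ) := Nat.cast_nonneg n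
    calc |p n| * ((n : ℝ) * |x| ^ (n - 1))
        ≤ (C * ((n : ℝ) + 2) ^ 3) * ((n : ℝ) * r ^ (n - 1)) := by
          gcongr
          exact hp n
      _ ≤ C * ((n : ℝ) + 2) ^ 4 * r ^ (n - 1) := by
          have h3 : (n : ℝ) * ((n : ℝ) + 2) ^ 3 ≤ ((n : ℝ) + 2) ^ 4 := by
            nlinarith [pow_nonneg hn2 3]
          have h4 : (0:ℝ) ≤ r ^ (n-1) := by positivity
          nlinarith [mul_le_mul_of_nonneg_right (mul_le_mul_of_nonneg_left h3 hC) h4]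
  have key := hasDerivAt_tsum_of_isPreconnected hM Metric.isOpen_ball
    (convex_ball (0:ℝ) r).isPreconnected
    (g := fun n v => p n * v ^ n) (g' := fun n x => p n * ((n : ℝ) * x ^ (n - 1)))
    (fun n x _ => (hasDerivAt_pow n x).const_mul (p n)) hbound
    (Metric.mem_ball_self hr0)
    (summ_cube p C hC hp (v := 0) (by norm_num))
    (show u ∈ Metric.ball (0:ℝ) r by simpa [Real.dist_eq] using hur)
  have hsum : Summable (fun n : ℕ => p n * ((n : ℝ) * u ^ (n - 1))) :=
    Summable.of_norm_bounded hM fun n =>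
      hbound n u (by simpa [Real.dist_eq] using hur)
  have heq : ∑' n : ℕ, p n * ((n : ℝ) * u ^ (n - 1))
      = ∑' k : ℕ, ((k : ℝ) + 1) * p (k + 1) * u ^ k := by
    rw [Summable.tsum_eq_zero_add hsum]
    simp only [Nat.cast_zero, zero_mul, mul_zero, zero_add, Nat.add_sub_cancel]
    exact tsum_congr fun n => by push_cast; ring
  exact heq ▸ key

/-- The generating function `π(u) = Σ_{k ≥ 1} φ_k u^{k−1}` of the defence coefficients is
well defined and twice differentiable on `[0,1)` and solves there the ODE
`u²(1−u)π'' + u(θu(1−u) + 2 − 3u)π' − 2π + θ/b = 0`. -/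
theorem stmt_17 (b c : ℝ) (hb : 0 < b) (hc : 0 < c) (θ : ℝ) (hθ : θ = b / c)
    (φ : ℕ → ℝ) (hφ1 : φ 1 = 1 / (2 * c))
    (hrec : ∀ n : ℕ, 2 ≤ n →
      ((n : ℝ) + 2) * φ (n + 1) + (θ - (n : ℝ) - 1) * φ n
        - θ * (((n : ℝ) - 2) / ((n : ℝ) - 1)) * φ (n - 1) = 0)
    (hbdd : ∃ C : ℝ, ∀ k : ℕ, 1 ≤ k → (k : ℝ) * |φ k| ≤ C) :
    (∀ u ∈ Set.Ico (0 : ℝ) 1, Summable (fun k : ℕ => φ (k + 1) * u ^ k)) ∧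
    ∀ u ∈ Set.Ico (0 : ℝ) 1,
      DifferentiableAt ℝ (fun v : ℝ => ∑' k : ℕ, φ (k + 1) * v ^ k) u ∧
      DifferentiableAt ℝ (deriv (fun v : ℝ => ∑' k : ℕ, φ (k + 1) * v ^ k)) u ∧
      u ^ 2 * (1 - u) * deriv (deriv (fun v : ℝ => ∑' k : ℕ, φ (k + 1) * v ^ k)) u
        + u * (θ * u * (1 - u) + 2 - 3 * u)
            * deriv (fun v : ℝ => ∑' k : ℕ, φ (k + 1) * v ^ k) u
        - 2 * (∑' k : ℕ, φ (k + 1) * u ^ k) + θ / b = 0 := by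
  obtain ⟨C, hC⟩ := hbdd
  have hC0 : 0 ≤ C := by
    have h := hC 1 le_rfl
    have := abs_nonneg (φ 1)
    push_cast at h
    linarith
  -- coefficient bounds
  have hone : ∀ n : ℕ, (1:ℝ) ≤ ((n:ℝ) + 2) ^ 3 := by
    intro n
    have h0 : (0:ℝ) ≤ (n:ℝ) := Nat.cast_nonneg n
    nlinarith [mul_nonneg (mul_nonneg h0 h0) h0, sq_nonneg ((n:ℝ))]
  have hp : ∀ n : ℕ, |φ (n + 1)| ≤ C * ((n : ℝ) + 2) ^ 3 := by
    intro n
    have h := hC (n + 1) (by omega)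
    push_cast at h
    have h1 : |φ (n+1)| ≤ C := by nlinarith [abs_nonneg (φ (n+1)), Nat.cast_nonneg (α := ℝ) n]
    nlinarith [hone n]
  have hq : ∀ n : ℕ, |((n:ℝ) + 1) * φ (n + 2)| ≤ C * ((n : ℝ) + 2) ^ 3 := by
    intro n
    have h := hC (n + 2) (by omega)
    push_cast at h
    have hn : (0:ℝ) ≤ (n:ℝ) := Nat.cast_nonneg n
    have h1 : |((n:ℝ) + 1) * φ (n + 2)| = ((n:ℝ)+1) * |φ (n+2)| := by
      rw [abs_mul, abs_of_nonneg (by linarith : (0:ℝ) ≤ (n:ℝ)+1)]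
    rw [h1]
    have h2 : ((n:ℝ)+1) * |φ (n+2)| ≤ C := by nlinarith [abs_nonneg (φ (n+2))]
    nlinarith [hone n]
  have hr : ∀ n : ℕ, |((n:ℝ) + 1) * (((n:ℝ) + 2) * φ (n + 3))| ≤ C * ((n : ℝ) + 2) ^ 3 := by
    intro n
    have h := hC (n + 3) (by omega)
    push_cast at h
    have hn : (0:ℝ) ≤ (n:ℝ) := Nat.cast_nonneg n
    have h1 : |((n:ℝ) + 1) * (((n:ℝ)+2) * φ (n + 3))| = ((n:ℝ)+1) * (((n:ℝ)+2) * |φ (n+3)|) := by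
      rw [abs_mul, abs_mul, abs_of_nonneg (by linarith : (0:ℝ) ≤ (n:ℝ)+1),
        abs_of_nonneg (by linarith : (0:ℝ) ≤ (n:ℝ)+2)]
    rw [h1]
    have hx : (0:ℝ) ≤ |φ (n+3)| := abs_nonneg _
    have e1 : ((n:ℝ)+1) * (((n:ℝ)+2) * |φ (n+3)|) ≤ ((n:ℝ)+2) * (((n:ℝ)+3) * |φ (n+3)|) := by
      nlinarith [mul_nonneg (by linarith : (0:ℝ) ≤ (n:ℝ)+2) hx]
    have e2 : ((n:ℝ)+2) * (((n:ℝ)+3) * |φ (n+3)|) ≤ ((n:ℝ)+2) * C :=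
      mul_le_mul_of_nonneg_left h (by linarith)
    have e3 : ((n:ℝ)+2) * C ≤ C * ((n:ℝ)+2)^3 := by
      have hsq : (1:ℝ) ≤ ((n:ℝ)+2)^2 := by nlinarith
      nlinarith [mul_nonneg hC0 (by linarith : (0:ℝ) ≤ (n:ℝ)+2), mul_le_mul_of_nonneg_left hsq (mul_nonneg hC0 (by linarith : (0:ℝ) ≤ (n:ℝ)+2))]
    linarith
  have hsummable : ∀ v : ℝ, |v| < 1 → Summable (fun k : ℕ => φ (k + 1) * v ^ k) :=
    fun v hv => summ_cube (fun k => φ (k + 1)) C hC0 hp hv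
  refine ⟨fun u hu => hsummable u (by rw [abs_of_nonneg hu.1]; exact hu.2), ?_⟩
  intro u hu
  have hu1 : |u| < 1 := by rw [abs_of_nonneg hu.1]; exact hu.2
  have hf_at : ∀ v : ℝ, |v| < 1 → HasDerivAt (fun w : ℝ => ∑' k : ℕ, φ (k + 1) * w ^ k)
      (∑' k : ℕ, ((k : ℝ) + 1) * φ (k + 2) * v ^ k) v := by
    intro v hv
    exact core (fun k => φ (k + 1)) C hC0 hp hv
  have hderiv_f : ∀ v : ℝ, |v| < 1 → deriv (fun w : ℝ => ∑' k : ℕ, φ (k + 1) * w ^ k) v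
      = ∑' k : ℕ, ((k : ℝ) + 1) * φ (k + 2) * v ^ k := fun v hv => (hf_at v hv).deriv
  have hg_at : HasDerivAt (fun w : ℝ => ∑' k : ℕ, ((k : ℝ) + 1) * φ (k + 2) * w ^ k)
      (∑' k : ℕ, ((k : ℝ) + 1) * (((k : ℝ) + 2) * φ (k + 3)) * u ^ k) u := by
    have h := core (fun k => ((k : ℝ) + 1) * φ (k + 2)) C hC0 hq hu1
    have he : (∑' k : ℕ, ((k : ℝ) + 1) * (((k : ℝ) + 2) * φ (k + 3)) * u ^ k)
        = ∑' k : ℕ, ((k : ℝ) + 1) * (((((k + 1 : ℕ)) : ℝ) + 1) * φ (k + 1 + 2)) * u ^ k :=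
      tsum_congr fun k => by push_cast; ring
    rw [he]
    exact h
  have hball : Metric.ball (0 : ℝ) 1 ∈ nhds u :=
    Metric.isOpen_ball.mem_nhds (by simpa [Real.dist_eq] using hu1)
  have hev : deriv (fun w : ℝ => ∑' k : ℕ, φ (k + 1) * w ^ k)
      =ᶠ[nhds u] (fun w : ℝ => ∑' k : ℕ, ((k : ℝ) + 1) * φ (k + 2) * w ^ k) :=
    Filter.eventually_of_mem hball fun v hv => hderiv_f v (by simpa [Real.dist_eq] using hv)
  have hdd : HasDerivAt (deriv (fun w : ℝ => ∑' k : ℕ, φ (k + 1) * w ^ k))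
      (∑' k : ℕ, ((k : ℝ) + 1) * (((k : ℝ) + 2) * φ (k + 3)) * u ^ k) u :=
    hg_at.congr_of_eventuallyEq hev
  refine ⟨(hf_at u hu1).differentiableAt, hdd.differentiableAt, ?_⟩
  rw [hdd.deriv, (hf_at u hu1).deriv]
  set S0 := ∑' k : ℕ, φ (k + 1) * u ^ k with hS0
  set S1 := ∑' k : ℕ, ((k : ℝ) + 1) * φ (k + 2) * u ^ k with hS1
  set S2 := ∑' k : ℕ, ((k : ℝ) + 1) * (((k : ℝ) + 2) * φ (k + 3)) * u ^ k with hS2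
  have h0 : HasSum (fun k : ℕ => φ (k + 1) * u ^ k) S0 := (hsummable u hu1).hasSum
  have h1 : HasSum (fun k : ℕ => ((k : ℝ) + 1) * φ (k + 2) * u ^ k) S1 :=
    (summ_cube (fun k => ((k : ℝ) + 1) * φ (k + 2)) C hC0 hq hu1).hasSum
  have h2 : HasSum (fun k : ℕ => ((k : ℝ) + 1) * (((k : ℝ) + 2) * φ (k + 3)) * u ^ k) S2 :=
    (summ_cube (fun k => ((k : ℝ) + 1) * (((k : ℝ) + 2) * φ (k + 3))) C hC0 hr hu1).hasSum
  have hT1 : HasSum (fun m : ℕ => (m : ℝ) * ((m : ℝ) - 1) * φ (m + 1) * u ^ m) (u ^ 2 * S2) := by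
    refine shift_hasSum 2 (hasSum_congr' (h2.mul_left (u ^ 2)) fun k => ?_) ?_
    · push_cast; ring
    · intro i hi; interval_cases i <;> norm_num
  have hT2 : HasSum (fun m : ℕ => if m = 0 then 0 else ((m : ℝ) - 1) * ((m : ℝ) - 2) * φ m * u ^ m)
      (u ^ 3 * S2) := by
    refine shift_hasSum 3 (hasSum_congr' (h2.mul_left (u ^ 3)) fun k => ?_) ?_
    · rw [if_neg (by omega : ¬(k + 3 = 0))]; push_cast; ring
    · intro i hi; interval_cases i <;> norm_num
  have hT3 : HasSum (fun m : ℕ => (m : ℝ) * φ (m + 1) * u ^ m) (u * S1) := by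
    refine shift_hasSum 1 (hasSum_congr' (h1.mul_left u) fun k => ?_) ?_
    · push_cast; ring
    · intro i hi; interval_cases i <;> norm_num
  have hT4 : HasSum (fun m : ℕ => if m = 0 then 0 else ((m : ℝ) - 1) * φ m * u ^ m)
      (u ^ 2 * S1) := by
    refine shift_hasSum 2 (hasSum_congr' (h1.mul_left (u ^ 2)) fun k => ?_) ?_
    · rw [if_neg (by omega : ¬(k + 2 = 0))]; push_cast; ring
    · intro i hi; interval_cases i <;> norm_num
  have hT5 : HasSum (fun m : ℕ => if m ≤ 1 then 0 else ((m : ℝ) - 2) * φ (m - 1) * u ^ m)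
      (u ^ 3 * S1) := by
    refine shift_hasSum 3 (hasSum_congr' (h1.mul_left (u ^ 3)) fun k => ?_) ?_
    · rw [if_neg (by omega : ¬(k + 3 ≤ 1)), show k + 3 - 1 = k + 2 from rfl]; push_cast; ring
    · intro i hi; interval_cases i <;> norm_num
  have hTot := (((((hT1.sub hT2).add (hT4.mul_left θ)).sub (hT5.mul_left θ)).add
    (hT3.mul_left 2)).sub (hT4.mul_left 3)).sub (h0.mul_left 2)
  have hcoeff : ∀ m : ℕ,
      ((((((m : ℝ) * ((m : ℝ) - 1) * φ (m + 1) * u ^ m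
        - (if m = 0 then 0 else ((m : ℝ) - 1) * ((m : ℝ) - 2) * φ m * u ^ m))
        + θ * (if m = 0 then 0 else ((m : ℝ) - 1) * φ m * u ^ m))
        - θ * (if m ≤ 1 then 0 else ((m : ℝ) - 2) * φ (m - 1) * u ^ m))
        + 2 * ((m : ℝ) * φ (m + 1) * u ^ m))
        - 3 * (if m = 0 then 0 else ((m : ℝ) - 1) * φ m * u ^ m))
        - 2 * (φ (m + 1) * u ^ m)
      = (if m = 0 then -(2 * φ 1) else 0) := by
    intro m
    match m with
    | 0 => norm_num
    | 1 => norm_num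
    | (k + 2) =>
      have h := hrec (k + 2) (by omega)
      have hk0 : (0:ℝ) ≤ (k : ℝ) := Nat.cast_nonneg k
      have hk1 : ((k : ℝ) + 1) ≠ 0 := by positivity
      push_cast at h
      rw [show ((k:ℝ) + 2 - 2) = (k:ℝ) from by ring,
        show ((k:ℝ) + 2 - 1) = (k:ℝ) + 1 from by ring] at h
      field_simp at h
      rw [if_neg (by omega : ¬(k + 2 = 0)), if_neg (by omega : ¬(k + 2 ≤ 1)),
        show k + 2 - 1 = k + 1 from rfl]
      push_cast
      linear_combination (u ^ (k + 2)) * h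
  have hV := (hasSum_congr' hTot hcoeff).unique (hasSum_ite_eq 0 (-(2 * φ 1)))
  rw [hφ1] at hV
  have hθb : θ / b = 1 / c := by rw [hθ]; field_simp
  rw [hθb]
  linear_combination hV
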